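/- Let f(z₁,z₂) = (2z₁z₂ − z₁ − z₂)/(2 − z₁ − z₂). Then f maps 𝔻² into the closed unit disk, and f has non-tangential limit −1 at (1,1); however, f does not extend continuously to 𝔻̄² at (1,1): along the tangential path z_ε(t) = (1 − ε e^{it} cos t, 1 − ε e^{−it} cos t), t ∈ (0, π/2), f is constantly −1 + ε, while z_ε(t) → (1,1) as t → π/2. -/

import Mathlib

open Filter

/-- The rational inner function `(2z₁z₂ − z₁ − z₂)/(2 − z₁ − z₂)`. -/
noncomputable def f13 (z : ℂ × ℂ) : ℂ := (2 * z.1 * z.2 - z.1 - z.2) / (2 - z.1 - z.2)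

/-- The tangential path `z_ε(t) = (1 − ε e^{it} cos t, 1 − ε e^{−it} cos t)`. -/
noncomputable def path13 (ε t : ℝ) : ℂ × ℂ :=
  (1 - (ε : ℂ) * Complex.exp (Complex.I * (t : ℂ)) * ((Real.cos t : ℝ) : ℂ),
   1 - (ε : ℂ) * Complex.exp (-(Complex.I * (t : ℂ))) * ((Real.cos t : ℝ) : ℂ))

/-- A non-tangential approach region to `0` in `(RHP)²`. -/
def AR2 (c : ℝ) : Set (ℂ × ℂ) :=
  {ζ | 0 < ζ.1.re ∧ 0 < ζ.2.re ∧
    ‖ζ.1‖ ≤ c * ζ.1.re ∧ ‖ζ.2‖ ≤ c * ζ.2.re ∧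
    ‖ζ.1‖ ≤ c * ‖ζ.2‖ ∧ ‖ζ.2‖ ≤ c * ‖ζ.1‖ ∧
    ‖ζ.1‖ ≤ c * ζ.2.re ∧ ‖ζ.2‖ ≤ c * ζ.1.re}

lemma norm_num_le_den (a b : ℂ) (h1 : ‖a‖ < 1) (h2 : ‖b‖ < 1) :
    ‖2 * a * b - a - b‖ ≤ ‖2 - a - b‖ := by
  have hA : Complex.normSq a < 1 := by
    rw [← Complex.sq_norm]
    nlinarith [norm_nonneg a]
  have hB : Complex.normSq b < 1 := by
    rw [← Complex.sq_norm]
    nlinarith [norm_nonneg b]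
  rw [Complex.norm_def, Complex.norm_def]
  apply Real.sqrt_le_sqrt
  simp only [Complex.normSq_apply, Complex.sub_re, Complex.sub_im, Complex.mul_re,
    Complex.mul_im, Complex.re_ofNat, Complex.im_ofNat] at hA hB ⊢
  set x := a.re; set y := a.im; set u := b.re; set v := b.im
  have hAx : x ^ 2 + y ^ 2 < 1 := by simpa [sq] using hA
  have hBx : u ^ 2 + v ^ 2 < 1 := by simpa [sq] using hB
  nlinarith [sq_nonneg (1 - x), sq_nonneg (1 - u), sq_nonneg y, sq_nonneg v,
    mul_nonneg (by nlinarith : (0:ℝ) ≤ 1 - x ^ 2 - y ^ 2)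
      (by nlinarith : (0:ℝ) ≤ 2 * (1 - u) - (1 - u ^ 2 - v ^ 2)),
    mul_nonneg (by nlinarith : (0:ℝ) ≤ 1 - u ^ 2 - v ^ 2)
      (by nlinarith : (0:ℝ) ≤ 2 * (1 - x) - (1 - x ^ 2 - y ^ 2))]

/-- `f = (2z₁z₂−z₁−z₂)/(2−z₁−z₂)` maps `𝔻²` into the closed disk, has non-tangential
limit `−1` at `(1,1)`, yet is constantly `−1+ε` along the tangential path `z_ε`. -/
theorem stmt13 :
    (∀ z : ℂ × ℂ, ‖z.1‖ < 1 → ‖z.2‖ < 1 → ‖f13 z‖ ≤ 1) ∧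
    (∀ c : ℝ, 1 < c →
      Tendsto (fun ζ : ℂ × ℂ => f13 (1 - ζ.1, 1 - ζ.2))
        (nhdsWithin 0 (AR2 c)) (nhds (-1))) ∧
    (∀ ε : ℝ, 0 < ε → ε < 1 →
      (∀ t ∈ Set.Ioo (0 : ℝ) (Real.pi / 2), f13 (path13 ε t) = -1 + (ε : ℂ)) ∧
      Tendsto (fun t => path13 ε t)
        (nhdsWithin (Real.pi / 2) (Set.Ioo (0 : ℝ) (Real.pi / 2))) (nhds (1, 1))) := by
  refine ⟨?_, ?_, ?_⟩
  · -- part 1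
    intro z h1 h2
    have hd : (2 : ℂ) - z.1 - z.2 ≠ 0 := by
      intro h
      have hab : z.1 + z.2 = 2 := by linear_combination -h
      have : ‖(2:ℂ)‖ ≤ ‖z.1‖ + ‖z.2‖ := by rw [← hab]; exact norm_add_le _ _
      rw [show ‖(2:ℂ)‖ = 2 by norm_num] at this
      linarith
    rw [f13, norm_div, div_le_one (norm_pos_iff.mpr hd)]
    exact norm_num_le_den z.1 z.2 h1 h2
  · -- part 2
    intro c hc
    have hc0 : (0:ℝ) < c := by linarith
    have h0 : Tendsto (fun ζ : ℂ × ℂ => 2 * ζ.1 * ζ.2 / (ζ.1 + ζ.2))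
        (nhdsWithin 0 (AR2 c)) (nhds 0) := by
      refine squeeze_zero_norm' (a := fun ζ : ℂ × ℂ => 2 * c * ‖ζ.2‖) ?_ ?_
      · filter_upwards [self_mem_nhdsWithin] with ζ hζ
        obtain ⟨hr1, hr2, hn1, hn2, -, -, -, -⟩ := hζ
        have hre : ζ.1.re + ζ.2.re ≤ ‖ζ.1 + ζ.2‖ := by
          simpa [Complex.add_re] using Complex.re_le_norm (ζ.1 + ζ.2)
        have hpos : (0:ℝ) < ‖ζ.1 + ζ.2‖ := by linarith
        rw [norm_div, div_le_iff₀ hpos]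
        have h1 : ‖ζ.1‖ ≤ c * ‖ζ.1 + ζ.2‖ := by nlinarith
        have := norm_nonneg ζ.2
        calc ‖2 * ζ.1 * ζ.2‖ = 2 * ‖ζ.1‖ * ‖ζ.2‖ := by
              simp [norm_mul]
          _ ≤ 2 * (c * ‖ζ.1 + ζ.2‖) * ‖ζ.2‖ := by nlinarith [norm_nonneg ζ.1]
          _ = 2 * c * ‖ζ.2‖ * ‖ζ.1 + ζ.2‖ := by ring
      · have hcont : Continuous fun ζ : ℂ × ℂ => 2 * c * ‖ζ.2‖ := by fun_prop
        have h2 : Tendsto (fun ζ : ℂ × ℂ => 2 * c * ‖ζ.2‖) (nhds 0) (nhds 0) := by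
          simpa using hcont.tendsto 0
        exact h2.mono_left nhdsWithin_le_nhds
    have heq : ∀ᶠ ζ : ℂ × ℂ in nhdsWithin 0 (AR2 c),
        (-1 + 2 * ζ.1 * ζ.2 / (ζ.1 + ζ.2)) = f13 (1 - ζ.1, 1 - ζ.2) := by
      filter_upwards [self_mem_nhdsWithin] with ζ hζ
      obtain ⟨hr1, hr2, -⟩ := hζ
      have hsum : ζ.1 + ζ.2 ≠ 0 := by
        intro h
        have : (ζ.1 + ζ.2).re = 0 := by rw [h]; simp
        rw [Complex.add_re] at this
        linarith
      rw [f13]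
      have hden : (2 : ℂ) - (1 - ζ.1) - (1 - ζ.2) = ζ.1 + ζ.2 := by ring
      rw [show ((1:ℂ) - ζ.1, (1:ℂ) - ζ.2).1 = 1 - ζ.1 from rfl,
        show ((1:ℂ) - ζ.1, (1:ℂ) - ζ.2).2 = 1 - ζ.2 from rfl, hden]
      field_simp
      ring
    have hlim : Tendsto (fun ζ : ℂ × ℂ => -1 + 2 * ζ.1 * ζ.2 / (ζ.1 + ζ.2))
        (nhdsWithin 0 (AR2 c)) (nhds (-1 + 0)) := tendsto_const_nhds.add h0
    rw [add_zero] at hlim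
    exact hlim.congr' heq
  · -- part 3
    intro ε hε0 hε1
    constructor
    · intro t ht
      have hcpos : 0 < Real.cos t :=
        Real.cos_pos_of_mem_Ioo ⟨by linarith [ht.1, Real.pi_pos], ht.2⟩
      set C : ℂ := ((Real.cos t : ℝ) : ℂ) with hCdef
      set S : ℂ := ((Real.sin t : ℝ) : ℂ) with hSdef
      have hCS : C ^ 2 + S ^ 2 = 1 := by
        rw [hCdef, hSdef]
        norm_cast
        rw [add_comm]
        exact_mod_cast Real.sin_sq_add_cos_sq t
      have hexp1 : Complex.exp (Complex.I * (t : ℂ)) = C + S * Complex.I := by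
        rw [mul_comm, Complex.exp_mul_I, ← Complex.ofReal_cos, ← Complex.ofReal_sin]
      have hexp2 : Complex.exp (-(Complex.I * (t : ℂ))) = C - S * Complex.I := by
        rw [show -(Complex.I * (t:ℂ)) = ((-t : ℝ) : ℂ) * Complex.I by push_cast; ring,
          Complex.exp_mul_I]
        push_cast
        rw [Complex.cos_neg, Complex.sin_neg, ← Complex.ofReal_cos, ← Complex.ofReal_sin]
        ring
      have hCne : C ≠ 0 := by
        rw [hCdef]
        exact_mod_cast hcpos.ne'
      have hεne : ((ε : ℝ) : ℂ) ≠ 0 := by exact_mod_cast hε0.ne'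
      have hden : (2 : ℂ) - (path13 ε t).1 - (path13 ε t).2 = 2 * (ε : ℂ) * C ^ 2 := by
        simp only [path13, hexp1, hexp2]
        ring
      have hdne : (2 : ℂ) - (path13 ε t).1 - (path13 ε t).2 ≠ 0 := by
        rw [hden]
        exact mul_ne_zero (mul_ne_zero two_ne_zero hεne) (pow_ne_zero _ hCne)
      rw [f13, div_eq_iff hdne, hden]
      simp only [path13, hexp1, hexp2]
      linear_combination (2 * (ε:ℂ) ^ 2 * C ^ 2) * hCS -
        (2 * (ε:ℂ) ^ 2 * C ^ 2 * S ^ 2) * Complex.I_sq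
    · have hcont : Continuous (fun t : ℝ => path13 ε t) := by
        unfold path13
        fun_prop
      have h : Tendsto (fun t => path13 ε t)
          (nhdsWithin (Real.pi / 2) (Set.Ioo (0 : ℝ) (Real.pi / 2)))
          (nhds (path13 ε (Real.pi / 2))) :=
        (hcont.tendsto (Real.pi / 2)).mono_left nhdsWithin_le_nhds
      have hval : path13 ε (Real.pi / 2) = (1, 1) := by
        simp [path13, Real.cos_pi_div_two]
      rwa [hval] at h
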